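/- Sequential composition: let M₁ : D → Measure(Ω₁) be ε₁-differentially private and M₂ : D → Measure(Ω₂) be ε₂-differentially private, both with respect to the same neighboring relation N on D, and suppose each M₁(d) and M₂(d) is a σ-finite (e.g., probability) measure. Then the joint mechanism d ↦ (M₁(d)).prod(M₂(d)) mapping into Measure(Ω₁ × Ω₂) is (ε₁ + ε₂)-differentially private with respect to N. -/

import Mathlib

open MeasureTheory

/-- A mechanism `M : D → Measure Ω` is `ε`-differentially private with respect to a
neighboring relation `N` if for all neighboring `d, d'` and all measurable `S`,
`M d S ≤ exp ε * M d' S`. -/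
def IsDP {D Ω : Type*} [MeasurableSpace Ω] (N : D → D → Prop) (ε : ℝ)
    (M : D → Measure Ω) : Prop :=
  ∀ d d', N d d' → ∀ S : Set Ω, MeasurableSet S →
    M d S ≤ ENNReal.ofReal (Real.exp ε) * M d' S

/-- sequential composition. If `M₁` is `ε₁`-DP and `M₂` is `ε₂`-DP with
respect to the same neighboring relation, with σ-finite outputs, then the joint
mechanism `d ↦ (M₁ d).prod (M₂ d)` is `(ε₁ + ε₂)`-DP. -/
theorem sequential_composition_dp {D Ω₁ Ω₂ : Type*} [MeasurableSpace Ω₁]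
    [MeasurableSpace Ω₂] (N : D → D → Prop) (ε₁ ε₂ : ℝ)
    (M₁ : D → Measure Ω₁) (M₂ : D → Measure Ω₂)
    (hσ₁ : ∀ d, SigmaFinite (M₁ d)) (hσ₂ : ∀ d, SigmaFinite (M₂ d))
    (h₁ : IsDP N ε₁ M₁) (h₂ : IsDP N ε₂ M₂) :
    IsDP N (ε₁ + ε₂) (fun d => (M₁ d).prod (M₂ d)) := by
  intro d d' hN S hS
  haveI := hσ₁ d; haveI := hσ₂ d; haveI := hσ₁ d'; haveI := hσ₂ d'
  have hμ : M₁ d ≤ ENNReal.ofReal (Real.exp ε₁) • M₁ d' := by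
    refine Measure.le_iff.2 fun s hs => ?_
    simpa using h₁ d d' hN s hs
  calc ((M₁ d).prod (M₂ d)) S
      = ∫⁻ x, M₂ d (Prod.mk x ⁻¹' S) ∂(M₁ d) := Measure.prod_apply hS
    _ ≤ ∫⁻ x, ENNReal.ofReal (Real.exp ε₂) * M₂ d' (Prod.mk x ⁻¹' S)
          ∂(ENNReal.ofReal (Real.exp ε₁) • M₁ d') := by
        refine lintegral_mono' hμ fun x => ?_
        exact h₂ d d' hN _ (measurable_prodMk_left hS)
    _ = ENNReal.ofReal (Real.exp ε₁) * (ENNReal.ofReal (Real.exp ε₂) *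
          ∫⁻ x, M₂ d' (Prod.mk x ⁻¹' S) ∂(M₁ d')) := by
        rw [lintegral_smul_measure, lintegral_const_mul _ (measurable_measure_prodMk_left hS), smul_eq_mul]
    _ = ENNReal.ofReal (Real.exp (ε₁ + ε₂)) * ((M₁ d').prod (M₂ d')) S := by
        rw [Measure.prod_apply hS, Real.exp_add, ENNReal.ofReal_mul (Real.exp_pos _).le]
        ring
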